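/- Let V be a finite-dimensional Euclidean space of dimension n. A subset D ⊆ V is a maximal pointed convex cone if and only if there exists an ordered orthonormal basis (v_1, ..., v_n) of V such that D = {c_1 v_1 + ... + c_n v_n : c_m < 0 where m = max{i : c_i ≠ 0}} ∪ {0}. -/

import Mathlib

open Set Module RealInnerProductSpace

noncomputable section

def IsCone {V : Type*} [AddCommGroup V] [Module ℝ V] (C : Set V) : Prop :=
  (0 : V) ∈ C ∧ ∀ r : ℝ, 0 ≤ r → ∀ v ∈ C, r • v ∈ C

def IsConvexCone {V : Type*} [AddCommGroup V] [Module ℝ V] (C : Set V) : Prop :=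
  IsCone C ∧ ∀ u ∈ C, ∀ v ∈ C, u + v ∈ C

def IsMaxPointedCone {V : Type*} [AddCommGroup V] [Module ℝ V] (D : Set V) : Prop :=
  IsConvexCone D ∧ D ∩ (-D) = {0} ∧ D ∪ (-D) = Set.univ

def hatCone {V : Type*} [AddCommGroup V] [Module ℝ V] (X : Set V) : Set V :=
  {0} ∪ {v | ∃ r : ℝ, 0 ≤ r ∧ ∃ x ∈ X, v = r • x}

def sphereN (n : ℕ) : Set (EuclideanSpace ℝ (Fin (n + 1))) := Metric.sphere 0 1

def PhiPlus (n : ℕ) : Set (EuclideanSpace ℝ (Fin (n + 1))) :=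
  {x | x ∈ sphereN n ∧ ∃ m : Fin (n + 1), 0 < x m ∧ ∀ i, m < i → x i = 0}

def PhiMinus (n : ℕ) : Set (EuclideanSpace ℝ (Fin (n + 1))) := {x | -x ∈ PhiPlus n}

def Ln (n : ℕ) : Set (Set (EuclideanSpace ℝ (Fin (n + 1)))) :=
  {X | ∃ D, IsMaxPointedCone D ∧ X = D ∩ PhiPlus n}

def coneOfBasis {V : Type*} [AddCommGroup V] [Module ℝ V] {n : ℕ}
    (v : Fin n → V) : Set V :=
  {0} ∪ {x | ∃ c : Fin n → ℝ, x = ∑ i, c i • v i ∧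
    ∃ m, c m < 0 ∧ ∀ i, m < i → c i = 0}

section Aux

variable {V : Type*} [AddCommGroup V] [Module ℝ V] {n : ℕ}

lemma mem_coneOfBasis_iff (b : Basis (Fin n) ℝ V) (x : V) :
    x ∈ coneOfBasis ⇑b ↔
      x = 0 ∨ ∃ m, b.repr x m < 0 ∧ ∀ i, m < i → b.repr x i = 0 := by
  constructor
  · rintro (h | ⟨c, rfl, m, hm, htail⟩)
    · exact Or.inl h
    · refine Or.inr ⟨m, ?_, fun i hi => ?_⟩
      · rw [congrFun (b.repr_sum_self c) m]; exact hm
      · rw [congrFun (b.repr_sum_self c) i]; exact htail i hi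
  · rintro (rfl | ⟨m, hm, htail⟩)
    · exact Or.inl rfl
    · exact Or.inr ⟨fun i => b.repr x i, (b.sum_repr x).symm, m, hm, htail⟩

/-- a nonzero element has a maximal nonzero coordinate -/
lemma exists_max_coord (b : Basis (Fin n) ℝ V) {x : V} (hx : x ≠ 0) :
    ∃ m, b.repr x m ≠ 0 ∧ ∀ i, m < i → b.repr x i = 0 := by
  classical
  set s : Finset (Fin n) := Finset.univ.filter (fun i => b.repr x i ≠ 0) with hs
  have hne : s.Nonempty := by
    by_contra h
    apply hx
    have : ∀ i, b.repr x i = 0 := by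
      intro i
      by_contra hi
      exact h ⟨i, by simp [hs, hi]⟩
    rw [← b.sum_repr x]
    simp [this]
  refine ⟨s.max' hne, by simpa [hs] using s.max'_mem hne, fun i hi => ?_⟩
  by_contra hi0
  exact absurd (s.le_max' i (by simp [hs, hi0])) (not_le.mpr hi)

lemma coneOfBasis_isMaxPointedCone (b : Basis (Fin n) ℝ V) :
    IsMaxPointedCone (coneOfBasis ⇑b) := by
  have hzero : (0 : V) ∈ coneOfBasis ⇑b := Or.inl rfl
  refine ⟨⟨⟨hzero, ?_⟩, ?_⟩, ?_, ?_⟩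
  · -- scaling
    intro r hr v hv
    rcases (mem_coneOfBasis_iff b v).1 hv with rfl | ⟨m, hm, htail⟩
    · simpa using hzero
    rcases eq_or_lt_of_le hr with rfl | hr'
    · simpa using hzero
    refine (mem_coneOfBasis_iff b _).2 (Or.inr ⟨m, ?_, fun i hi => ?_⟩)
    · rw [map_smul, Finsupp.smul_apply]
      simpa using mul_neg_of_pos_of_neg hr' hm
    · rw [map_smul, Finsupp.smul_apply]
      simp [htail i hi]
  · -- addition
    intro u hu v hv
    rcases (mem_coneOfBasis_iff b u).1 hu with rfl | ⟨mu, hmu, hu2⟩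
    · simpa using hv
    rcases (mem_coneOfBasis_iff b v).1 hv with rfl | ⟨mv, hmv, hv2⟩
    · simpa using hu
    refine (mem_coneOfBasis_iff b _).2 (Or.inr ⟨max mu mv, ?_, fun i hi => ?_⟩)
    · rw [map_add, Finsupp.add_apply]
      have hule : b.repr u (max mu mv) ≤ 0 := by
        rcases (le_max_left mu mv).lt_or_eq with h | h
        · exact le_of_eq (hu2 _ h)
        · exact h ▸ hmu.le
      have hvle : b.repr v (max mu mv) ≤ 0 := by
        rcases (le_max_right mu mv).lt_or_eq with h | h
        · exact le_of_eq (hv2 _ h)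
        · exact h ▸ hmv.le
      rcases le_total mu mv with h | h
      · exact add_neg_of_nonpos_of_neg hule (by rw [max_eq_right h]; exact hmv)
      · exact add_neg_of_neg_of_nonpos (by rw [max_eq_left h]; exact hmu) hvle
    · rw [map_add, Finsupp.add_apply,
        hu2 i (lt_of_le_of_lt (le_max_left _ _) hi),
        hv2 i (lt_of_le_of_lt (le_max_right _ _) hi)]
      ring
  · -- pointedness
    ext x
    simp only [Set.mem_inter_iff, Set.mem_neg, Set.mem_singleton_iff]
    constructor
    · rintro ⟨hx, hnx⟩
      by_contra hx0
      rcases (mem_coneOfBasis_iff b x).1 hx with rfl | ⟨m1, hm1, h1⟩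
      · exact hx0 rfl
      rcases (mem_coneOfBasis_iff b (-x)).1 hnx with h | ⟨m2, hm2, h2⟩
      · exact hx0 (by simpa using congrArg Neg.neg h)
      rcases lt_trichotomy m1 m2 with h | rfl | h
      · have := h1 m2 h
        rw [map_neg] at hm2
        simp [this] at hm2
      · rw [map_neg] at hm2
        simp at hm2
        exact absurd hm1 (not_lt.mpr hm2.le)
      · have := h2 m1 h
        rw [map_neg] at this
        simp at this
        simp [this] at hm1
    · rintro rfl
      exact ⟨hzero, by simpa using hzero⟩
  · -- maximality
    ext x
    simp only [Set.mem_union, Set.mem_neg, Set.mem_univ, iff_true]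
    by_cases hx : x = 0
    · exact Or.inl (hx ▸ hzero)
    obtain ⟨m, hm, htail⟩ := exists_max_coord b hx
    rcases lt_or_gt_of_ne hm with h | h
    · exact Or.inl ((mem_coneOfBasis_iff b x).2 (Or.inr ⟨m, h, htail⟩))
    · refine Or.inr ((mem_coneOfBasis_iff b (-x)).2 (Or.inr ⟨m, ?_, fun i hi => ?_⟩))
      · rw [map_neg]; simpa using h
      · rw [map_neg]; simp [htail i hi]

end Aux

section Sep

variable {V : Type*} [NormedAddCommGroup V] [InnerProductSpace ℝ V]

lemma IsMaxPointedCone.zero_mem {D : Set V} (hD : IsMaxPointedCone D) : (0 : V) ∈ D :=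
  hD.1.1.1

lemma IsMaxPointedCone.mem_or_neg_mem {D : Set V} (hD : IsMaxPointedCone D) (x : V) :
    x ∈ D ∨ -x ∈ D := by
  have := hD.2.2
  have hx : x ∈ D ∪ (-D) := this ▸ Set.mem_univ x
  rcases hx with h | h
  · exact Or.inl h
  · exact Or.inr (Set.mem_neg.mp h)

lemma IsMaxPointedCone.convex {D : Set V} (hD : IsMaxPointedCone D) : Convex ℝ D := by
  intro x hx y hy a b ha hb _
  exact hD.1.2 _ (hD.1.1.2 a ha x hx) _ (hD.1.1.2 b hb y hy)

lemma exists_sep [FiniteDimensional ℝ V] (hn : 0 < finrank ℝ V) {D : Set V}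
    (hD : IsMaxPointedCone D) :
    ∃ u : V, ‖u‖ = 1 ∧ ∀ d ∈ D, (inner ℝ d u : ℝ) ≤ 0 := by
  have hzero := hD.zero_mem
  -- affine span is everything
  have hspan : (Submodule.span ℝ D : Set V) = Set.univ := by
    rw [Set.eq_univ_iff_forall]
    intro x
    rcases hD.mem_or_neg_mem x with h | h
    · exact Submodule.subset_span h
    · simpa using (Submodule.span ℝ D).neg_mem (Submodule.subset_span h)
  have haff : affineSpan ℝ D = ⊤ := by
    have h1 := affineSpan_insert_zero (k := ℝ) D
    rw [Set.insert_eq_self.mpr hzero] at h1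
    have h2 : (affineSpan ℝ D : Set V) = (⊤ : AffineSubspace ℝ V) := by
      rw [h1, hspan]; rfl
    exact SetLike.coe_injective h2
  have hint : (interior D).Nonempty :=
    (hD.convex.interior_nonempty_iff_affineSpan_eq_top).2 haff
  -- 0 is not in the interior
  have h0int : (0 : V) ∉ interior D := by
    intro h0
    haveI : Nontrivial V := finrank_pos_iff.mp hn
    obtain ⟨v, hv⟩ := exists_ne (0 : V)
    rw [mem_interior_iff_mem_nhds, Metric.mem_nhds_iff] at h0
    obtain ⟨ε, hε, hball⟩ := h0
    set w : V := (ε / (2 * ‖v‖)) • v with hw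
    have hvn : 0 < ‖v‖ := norm_pos_iff.mpr hv
    have hwn : ‖w‖ = ε / 2 := by
      rw [hw, norm_smul, Real.norm_eq_abs, abs_of_pos (by positivity)]
      field_simp
    have hwD : w ∈ D := hball (by simp [Metric.mem_ball, hwn]; linarith)
    have hnwD : -w ∈ D := hball (by simp [Metric.mem_ball, hwn]; linarith)
    have : w ∈ D ∩ (-D) := ⟨hwD, by simpa [Set.mem_neg] using hnwD⟩
    rw [hD.2.1] at this
    simp only [Set.mem_singleton_iff] at this
    apply hv
    have : (ε / (2 * ‖v‖)) • v = 0 := this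
    rcases smul_eq_zero.mp this with h | h
    · exfalso; have : (0:ℝ) < ε / (2 * ‖v‖) := by positivity
      linarith [this, h.ge]
    · exact h
  obtain ⟨x, hx⟩ := hint
  -- -x is not in the closure of D
  have hnx : -x ∉ closure D := by
    intro hcl
    apply h0int
    have := hD.convex.combo_interior_closure_mem_interior hx hcl (by norm_num : (0:ℝ) < 1/2)
      (by norm_num : (0:ℝ) ≤ 1/2) (by norm_num)
    simpa [smul_neg, ← smul_add] using this
  obtain ⟨f, c, hfD, hfx⟩ :=
    geometric_hahn_banach_closed_point (hD.convex.closure) isClosed_closure hnx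
  have hc : 0 < c := by
    have := hfD 0 (subset_closure hzero)
    simpa using this
  have hfle : ∀ d ∈ D, f d ≤ 0 := by
    intro d hd
    by_contra h
    push_neg at h
    set t : ℝ := (c + 1) / f d with ht
    have htpos : 0 ≤ t := by positivity
    have := hfD (t • d) (subset_closure (hD.1.1.2 t htpos d hd))
    rw [map_smul, smul_eq_mul, ht] at this
    field_simp at this
    linarith
  set y : V := (InnerProductSpace.toDual ℝ V).symm f with hy
  have hyf : ∀ z : V, (inner ℝ y z : ℝ) = f z := fun z => InnerProductSpace.toDual_symm_apply
  have hy0 : y ≠ 0 := by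
    intro h
    have h2 : (0:ℝ) = f (-x) := by rw [← hyf (-x), h, inner_zero_left]
    linarith
  refine ⟨‖y‖⁻¹ • y, norm_smul_inv_norm hy0, fun d hd => ?_⟩
  rw [real_inner_smul_right, real_inner_comm, hyf d]
  have := hfle d hd
  have h1 : (0:ℝ) < ‖y‖⁻¹ := inv_pos.mpr (norm_pos_iff.mpr hy0)
  nlinarith

end Sep

section Ind

variable {V : Type*} [NormedAddCommGroup V] [InnerProductSpace ℝ V]

lemma coe_sum_smul (W : Submodule ℝ V) {k : ℕ} (r : Fin k → ℝ) (f : Fin k → W) :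
    ((∑ i, r i • f i : W) : V) = ∑ i, r i • (f i : V) := by
  push_cast
  rfl

end Ind

universe u

lemma forward_aux : ∀ (n : ℕ) (V : Type u) [NormedAddCommGroup V] [InnerProductSpace ℝ V]
    [FiniteDimensional ℝ V], finrank ℝ V = n → ∀ D : Set V, IsMaxPointedCone D →
    ∃ b : OrthonormalBasis (Fin n) ℝ V, D = coneOfBasis ⇑b := by
  intro n
  induction n with
  | zero =>
    intro V _ _ _ hV D hD
    haveI : Subsingleton V := finrank_zero_iff.mp hV
    refine ⟨(stdOrthonormalBasis ℝ V).reindex (finCongr hV), ?_⟩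
    ext x
    have hx : x = 0 := Subsingleton.elim x 0
    subst hx
    constructor
    · intro _; exact Set.mem_union_left _ rfl
    · intro _; exact hD.zero_mem
  | succ n ih =>
    intro V _ _ _ hV D hD
    obtain ⟨u, hu1, husep⟩ := exists_sep (by rw [hV]; omega) hD
    have hu0 : u ≠ 0 := by intro h; rw [h] at hu1; simp at hu1
    have huu : (inner ℝ u u : ℝ) = 1 := by
      rw [real_inner_self_eq_norm_mul_norm, hu1]; norm_num
    have hhalf : ∀ x : V, (inner ℝ x u : ℝ) < 0 → x ∈ D := by
      intro x hx
      rcases hD.mem_or_neg_mem x with h | h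
      · exact h
      · exfalso
        have := husep _ h
        rw [inner_neg_left] at this
        linarith
    set W : Submodule ℝ V := (ℝ ∙ u)ᗮ with hWdef
    have hWmem : ∀ x : V, x ∈ W ↔ (inner ℝ u x : ℝ) = 0 := fun x =>
      Submodule.mem_orthogonal_singleton_iff_inner_right
    have hWrank : finrank ℝ W = n := by
      have h1 := Submodule.finrank_add_finrank_orthogonal (K := ℝ ∙ u)
      rw [finrank_span_singleton hu0, hV] at h1
      rw [hWdef]
      omega
    set E : Set W := ((↑) : W → V) ⁻¹' D with hEdef
    have hEmem : ∀ z : W, z ∈ E ↔ (z : V) ∈ D := fun z => Iff.rfl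
    have hEmax : IsMaxPointedCone E := by
      refine ⟨⟨⟨?_, ?_⟩, ?_⟩, ?_, ?_⟩
      · show ((0 : W) : V) ∈ D
        simpa using hD.zero_mem
      · intro r hr v hv
        show ((r • v : W) : V) ∈ D
        rw [Submodule.coe_smul]
        exact hD.1.1.2 r hr _ hv
      · intro a ha b hb
        show ((a + b : W) : V) ∈ D
        rw [Submodule.coe_add]
        exact hD.1.2 _ ha _ hb
      · ext z
        simp only [Set.mem_inter_iff, Set.mem_neg, Set.mem_singleton_iff]
        constructor
        · rintro ⟨h1, h2⟩
          have h2' : ((-z : W) : V) ∈ D := h2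
          rw [Submodule.coe_neg] at h2'
          have : (z : V) ∈ D ∩ (-D) := ⟨h1, Set.mem_neg.mpr h2'⟩
          rw [hD.2.1] at this
          exact Subtype.ext this
        · rintro rfl
          constructor
          · show ((0 : W) : V) ∈ D; simpa using hD.zero_mem
          · show ((-(0 : W) : W) : V) ∈ D; simpa using hD.zero_mem
      · ext z
        simp only [Set.mem_union, Set.mem_univ, iff_true, Set.mem_neg]
        rcases hD.mem_or_neg_mem (z : V) with h | h
        · exact Or.inl h
        · right
          show ((-z : W) : V) ∈ D
          rw [Submodule.coe_neg]
          exact h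
    obtain ⟨b', hb'⟩ := ih W hWrank E hEmax
    set v : Fin (n + 1) → V := Fin.snoc (fun i => (b' i : V)) u with hvdef
    have hbW : ∀ i, (b' i : V) ∈ W := fun i => (b' i).2
    have hbu : ∀ i, (inner ℝ u (b' i : V) : ℝ) = 0 := fun i => (hWmem _).mp (hbW i)
    have hbu' : ∀ i, (inner ℝ (b' i : V) u : ℝ) = 0 := fun i => by
      rw [real_inner_comm]; exact hbu i
    have horth : Orthonormal ℝ v := by
      rw [orthonormal_iff_ite]
      intro i j
      induction i using Fin.lastCases with
      | last =>
        induction j using Fin.lastCases with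
        | last => simp [hvdef, Fin.snoc_last, huu, hu1]
        | cast j =>
          rw [if_neg (Fin.castSucc_lt_last j).ne']
          simp only [hvdef, Fin.snoc_last, Fin.snoc_castSucc]
          exact hbu j
      | cast i =>
        induction j using Fin.lastCases with
        | last =>
          rw [if_neg (Fin.castSucc_lt_last i).ne]
          simp only [hvdef, Fin.snoc_last, Fin.snoc_castSucc]
          exact hbu' i
        | cast j =>
          simp only [hvdef, Fin.snoc_castSucc]
          rw [← Submodule.coe_inner]
          rw [orthonormal_iff_ite.mp b'.orthonormal i j]
          simp [Fin.castSucc_inj]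
    have hcard : Fintype.card (Fin (n + 1)) = finrank ℝ V := by simp [hV]
    have hBv : ⇑(basisOfOrthonormalOfCardEqFinrank horth hcard) = v :=
      coe_basisOfOrthonormalOfCardEqFinrank horth hcard
    have horthB : Orthonormal ℝ ⇑(basisOfOrthonormalOfCardEqFinrank horth hcard) := by
      rwa [hBv]
    refine ⟨(basisOfOrthonormalOfCardEqFinrank horth hcard).toOrthonormalBasis horthB, ?_⟩
    have hcoe : ⇑((basisOfOrthonormalOfCardEqFinrank horth hcard).toOrthonormalBasis horthB)
        = v := by rw [Basis.coe_toOrthonormalBasis, hBv]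
    rw [hcoe]
    -- Now show D = coneOfBasis v
    ext x
    constructor
    · intro hxD
      by_cases hx0 : x = 0
      · exact Or.inl hx0
      have hc0le : (inner ℝ x u : ℝ) ≤ 0 := husep x hxD
      rcases hc0le.lt_or_eq with hneg | heq0
      · -- negative last coefficient
        have hwW : x - (inner ℝ x u : ℝ) • u ∈ W := by
          rw [hWmem, inner_sub_right, real_inner_smul_right, huu, real_inner_comm u x]
          ring
        right
        refine ⟨Fin.snoc (fun i => b'.toBasis.repr ⟨_, hwW⟩ i) (inner ℝ x u : ℝ), ?_,
          Fin.last n, ?_, ?_⟩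
        · rw [Fin.sum_univ_castSucc]
          simp only [Fin.snoc_castSucc, Fin.snoc_last, hvdef]
          have h1 : (∑ i, (b'.toBasis.repr ⟨_, hwW⟩ i) • b' i : W) = ⟨_, hwW⟩ := by
            conv_rhs => rw [← b'.toBasis.sum_repr ⟨_, hwW⟩]
            simp [OrthonormalBasis.coe_toBasis]
          have h2 : ∑ i : Fin n, (b'.toBasis.repr ⟨_, hwW⟩ i) • ((b' i : V))
              = x - (inner ℝ x u : ℝ) • u := by
            rw [← coe_sum_smul, h1]
          rw [h2]
          abel
        · simpa [Fin.snoc_last] using hneg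
        · intro i hi
          exact absurd hi (not_lt.mpr (Fin.le_last i))
      · -- x lies in W
        have hxW : x ∈ W := (hWmem x).mpr (by rw [real_inner_comm, ← heq0])
        have hzE : (⟨x, hxW⟩ : W) ∈ E := hxD
        rw [hb'] at hzE
        rcases hzE with h0 | ⟨c', hsum, m', hm', htail'⟩
        · exact absurd (congrArg Subtype.val h0) hx0
        right
        refine ⟨Fin.snoc c' 0, ?_, m'.castSucc, ?_, ?_⟩
        · rw [Fin.sum_univ_castSucc]
          simp only [Fin.snoc_castSucc, Fin.snoc_last, hvdef, zero_smul, add_zero]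
          have := congrArg Subtype.val hsum
          rw [coe_sum_smul] at this
          exact this
        · simpa [Fin.snoc_castSucc] using hm'
        · intro i hi
          induction i using Fin.lastCases with
          | last => simp [Fin.snoc_last]
          | cast j =>
            rw [Fin.snoc_castSucc]
            exact htail' j (Fin.castSucc_lt_castSucc_iff.mp hi)
    · rintro (rfl | ⟨c, rfl, m, hm, htail⟩)
      · exact hD.zero_mem
      have hinner : (inner ℝ (∑ i, c i • v i) u : ℝ) = c (Fin.last n) := by
        rw [sum_inner, Fin.sum_univ_castSucc]
        simp [hvdef, Fin.snoc_castSucc, Fin.snoc_last, real_inner_smul_left, hbu', huu, hu1]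
      induction m using Fin.lastCases with
      | last =>
        exact hhalf _ (by rw [hinner]; exact hm)
      | cast j =>
        have hlast0 : c (Fin.last n) = 0 := htail _ (Fin.castSucc_lt_last j)
        have hxW : (∑ i, c i • v i) ∈ W := (hWmem _).mpr
          (by rw [real_inner_comm, hinner, hlast0])
        have hz' : ∑ i, c i • v i = ((∑ i : Fin n, c i.castSucc • b' i : W) : V) := by
          rw [coe_sum_smul]
          conv_lhs => rw [Fin.sum_univ_castSucc]
          simp [hvdef, hlast0]
        have hz : (⟨∑ i, c i • v i, hxW⟩ : W) = ∑ i : Fin n, c i.castSucc • b' i :=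
          Subtype.ext hz'
        have hmem : (⟨∑ i, c i • v i, hxW⟩ : W) ∈ coneOfBasis ⇑b' :=
          Or.inr ⟨fun i => c i.castSucc, hz, j, hm, fun i hi =>
            htail _ (Fin.castSucc_lt_castSucc_iff.mpr hi)⟩
        rw [← hb'] at hmem
        exact hmem

theorem stmt9 {V : Type*} [NormedAddCommGroup V] [InnerProductSpace ℝ V]
    [FiniteDimensional ℝ V] (n : ℕ) (hV : Module.finrank ℝ V = n) (D : Set V) :
    IsMaxPointedCone D ↔ ∃ b : OrthonormalBasis (Fin n) ℝ V, D = coneOfBasis ⇑b := by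
  constructor
  · intro hD
    exact forward_aux n V hV D hD
  · rintro ⟨b, rfl⟩
    simpa using coneOfBasis_isMaxPointedCone b.toBasis
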